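/- Let Q, R, S, T be Hermitian operators squaring to the identity, with Q, R acting on H_A and S, T on H_B, and let C = Q⊗S + R⊗S + R⊗T − Q⊗T. Then for any unit vector ψ in H_A ⊗ H_B, |⟨ψ, C ψ⟩| ≤ 2√2 (the Tsirelson bound). -/

import Mathlib

open Matrix Kronecker

lemma kron_conjTranspose {m n : ℕ} (A : Matrix (Fin m) (Fin m) ℂ)
    (B : Matrix (Fin n) (Fin n) ℂ) : (A ⊗ₖ B)ᴴ = Aᴴ ⊗ₖ Bᴴ := by
  ext ⟨i, j⟩ ⟨k, l⟩
  simp [Matrix.conjTranspose_apply, Matrix.kroneckerMap_apply, mul_comm]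

lemma kron_clm_norm_le_one {m n : ℕ}
    (X : Matrix (Fin m) (Fin m) ℂ) (Y : Matrix (Fin n) (Fin n) ℂ)
    (hX : X.IsHermitian) (hY : Y.IsHermitian)
    (hX2 : X * X = 1) (hY2 : Y * Y = 1) :
    ‖Matrix.toEuclideanCLM (𝕜 := ℂ) (X ⊗ₖ Y)‖ ≤ 1 := by
  set u := Matrix.toEuclideanCLM (𝕜 := ℂ) (X ⊗ₖ Y) with hu
  have hstar : star u * u = 1 := by
    rw [hu, ← map_star (Matrix.toEuclideanCLM (𝕜 := ℂ)),
      ← _root_.map_mul (Matrix.toEuclideanCLM (𝕜 := ℂ)),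
      ← _root_.map_one (Matrix.toEuclideanCLM (𝕜 := ℂ) (n := Fin m × Fin n))]
    congr 1
    rw [Matrix.star_eq_conjTranspose, kron_conjTranspose, hX.eq, hY.eq,
      ← Matrix.mul_kronecker_mul, hX2, hY2, Matrix.one_kronecker_one]
  have h1 : ‖u‖ * ‖u‖ = ‖(1 : EuclideanSpace ℂ (Fin m × Fin n) →L[ℂ] EuclideanSpace ℂ (Fin m × Fin n))‖ := by
    rw [← CStarRing.norm_star_mul_self, hstar]
  have h2 : ‖(1 : EuclideanSpace ℂ (Fin m × Fin n) →L[ℂ] EuclideanSpace ℂ (Fin m × Fin n))‖ ≤ 1 :=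
    ContinuousLinearMap.norm_id_le
  nlinarith [norm_nonneg u]

lemma aux_norm5 {G : Type*} [SeminormedAddCommGroup G] (e x1 x2 x3 x4 : G) :
    ‖e + x1 - x2 - x3 + x4‖ ≤ ‖e‖ + ‖x1‖ + ‖x2‖ + ‖x3‖ + ‖x4‖ := by
  have h1 := norm_add_le (e + x1 - x2 - x3) x4
  have h2 := norm_sub_le (e + x1 - x2) x3
  have h3 := norm_sub_le (e + x1) x2
  have h4 := norm_add_le e x1
  linarith

set_option maxHeartbeats 1000000 in
/-- The Tsirelson bound: for Hermitian Q,R,S,T squaring to the identity and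
C = Q⊗S + R⊗S + R⊗T − Q⊗T, every unit vector ψ satisfies |⟨ψ, Cψ⟩| ≤ 2√2. -/
theorem tsirelson_bound {m n : ℕ}
    (Q R : Matrix (Fin m) (Fin m) ℂ) (S T : Matrix (Fin n) (Fin n) ℂ)
    (hQ : Q.IsHermitian) (hR : R.IsHermitian) (hS : S.IsHermitian) (hT : T.IsHermitian)
    (hQ2 : Q * Q = 1) (hR2 : R * R = 1) (hS2 : S * S = 1) (hT2 : T * T = 1)
    (ψ : Fin m × Fin n → ℂ) (hψ : star ψ ⬝ᵥ ψ = 1) :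
    ‖star ψ ⬝ᵥ ((Q ⊗ₖ S + R ⊗ₖ S + R ⊗ₖ T - Q ⊗ₖ T) *ᵥ ψ)‖ ≤
      2 * Real.sqrt 2 := by
  set Cm : Matrix (Fin m × Fin n) (Fin m × Fin n) ℂ :=
    Q ⊗ₖ S + R ⊗ₖ S + R ⊗ₖ T - Q ⊗ₖ T with hCm
  set φ := Matrix.toEuclideanCLM (𝕜 := ℂ) (n := Fin m × Fin n) with hφ
  set A := φ Cm with hA
  -- the key algebraic identity
  have hC2 : Cm * Cm = (1 + 1 + 1 + 1) + (Q ⊗ₖ S) * (R ⊗ₖ T) - (Q ⊗ₖ T) * (R ⊗ₖ S)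
      - (R ⊗ₖ S) * (Q ⊗ₖ T) + (R ⊗ₖ T) * (Q ⊗ₖ S) := by
    rw [hCm]
    simp only [Matrix.mul_add, Matrix.add_mul, Matrix.mul_sub, Matrix.sub_mul,
      ← Matrix.mul_kronecker_mul, hQ2, hR2, hS2, hT2, Matrix.one_kronecker_one]
    abel
  -- C is hermitian
  have hCH : Cm.IsHermitian := by
    rw [hCm]
    unfold Matrix.IsHermitian
    simp only [Matrix.conjTranspose_add, Matrix.conjTranspose_sub, kron_conjTranspose,
      hQ.eq, hR.eq, hS.eq, hT.eq]
  -- norms of the unitary pieces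
  have hQS := kron_clm_norm_le_one Q S hQ hS hQ2 hS2
  have hQT := kron_clm_norm_le_one Q T hQ hT hQ2 hT2
  have hRS := kron_clm_norm_le_one R S hR hS hR2 hS2
  have hRT := kron_clm_norm_le_one R T hR hT hR2 hT2
  have hone : ‖(1 : EuclideanSpace ℂ (Fin m × Fin n) →L[ℂ] EuclideanSpace ℂ (Fin m × Fin n))‖ ≤ 1 :=
    ContinuousLinearMap.norm_id_le
  -- bound ‖A‖² ≤ 8
  have hA2 : ‖A‖ * ‖A‖ ≤ 8 := by
    have h1 : ‖A‖ * ‖A‖ = ‖φ (Cm * Cm)‖ := by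
      rw [← CStarRing.norm_star_mul_self, hA, ← map_star φ, ← _root_.map_mul φ,
        Matrix.star_eq_conjTranspose, hCH.eq]
    rw [h1, hC2]
    simp only [map_add, map_sub, _root_.map_mul, _root_.map_one]
    have key := aux_norm5 ((1 : EuclideanSpace ℂ (Fin m × Fin n) →L[ℂ]
        EuclideanSpace ℂ (Fin m × Fin n)) + 1 + 1 + 1)
      (φ (Q ⊗ₖ S) * φ (R ⊗ₖ T)) (φ (Q ⊗ₖ T) * φ (R ⊗ₖ S))
      (φ (R ⊗ₖ S) * φ (Q ⊗ₖ T)) (φ (R ⊗ₖ T) * φ (Q ⊗ₖ S))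
    have e1 : ‖(1 : EuclideanSpace ℂ (Fin m × Fin n) →L[ℂ] EuclideanSpace ℂ (Fin m × Fin n))
        + 1 + 1 + 1‖ ≤ 4 := by
      have a1 := norm_add_le ((1 : EuclideanSpace ℂ (Fin m × Fin n) →L[ℂ]
        EuclideanSpace ℂ (Fin m × Fin n)) + 1 + 1) 1
      have a2 := norm_add_le ((1 : EuclideanSpace ℂ (Fin m × Fin n) →L[ℂ]
        EuclideanSpace ℂ (Fin m × Fin n)) + 1) 1
      have a3 := norm_add_le (1 : EuclideanSpace ℂ (Fin m × Fin n) →L[ℂ]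
        EuclideanSpace ℂ (Fin m × Fin n)) 1
      linarith
    have b1 := norm_mul_le (φ (Q ⊗ₖ S)) (φ (R ⊗ₖ T))
    have b2 := norm_mul_le (φ (Q ⊗ₖ T)) (φ (R ⊗ₖ S))
    have b3 := norm_mul_le (φ (R ⊗ₖ S)) (φ (Q ⊗ₖ T))
    have b4 := norm_mul_le (φ (R ⊗ₖ T)) (φ (Q ⊗ₖ S))
    nlinarith [norm_nonneg (φ (Q ⊗ₖ S)), norm_nonneg (φ (R ⊗ₖ T)),
      norm_nonneg (φ (Q ⊗ₖ T)), norm_nonneg (φ (R ⊗ₖ S))]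
  -- hence ‖A‖ ≤ 2√2
  have hAle : ‖A‖ ≤ 2 * Real.sqrt 2 := by
    have hs : (2 * Real.sqrt 2) * (2 * Real.sqrt 2) = 8 := by
      have := Real.mul_self_sqrt (by norm_num : (0:ℝ) ≤ 2)
      nlinarith
    nlinarith [norm_nonneg A, Real.sqrt_nonneg 2]
  -- now relate the dot product to the inner product
  set ψ' : EuclideanSpace ℂ (Fin m × Fin n) := (WithLp.equiv 2 _).symm ψ with hψ'
  have hinner : (inner ℂ ψ' (A ψ') : ℂ) = star ψ ⬝ᵥ (Cm *ᵥ ψ) := by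
    rw [hA, hφ, hψ']
    exact dotProduct_comm _ _
  have hnψ : ‖ψ'‖ = 1 := by
    have h1 : (inner ℂ ψ' ψ' : ℂ) = 1 := by
      rw [hψ']
      exact (dotProduct_comm _ _).trans hψ
    have h2 : (inner ℂ ψ' ψ' : ℂ) = (‖ψ'‖ : ℂ) ^ 2 := by
      rw [inner_self_eq_norm_sq_to_K]
      norm_cast
    rw [h2] at h1
    have h3 : (‖ψ'‖ : ℝ) ^ 2 = 1 := by exact_mod_cast h1
    nlinarith [norm_nonneg ψ']
  calc ‖star ψ ⬝ᵥ (Cm *ᵥ ψ)‖ = ‖(inner ℂ ψ' (A ψ') : ℂ)‖ := by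
        rw [hinner]
    _ ≤ ‖ψ'‖ * ‖A ψ'‖ := norm_inner_le_norm _ _
    _ ≤ ‖ψ'‖ * (‖A‖ * ‖ψ'‖) := by gcongr; exact A.le_opNorm ψ'
    _ = ‖A‖ := by rw [hnψ]; ring
    _ ≤ 2 * Real.sqrt 2 := hAle
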